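/- Let Γ be an amenable group, Δ a group, and α : Γ → Aut(Δ) an action by automorphisms. Then for all finite subsets F ⊆ Γ, E ⊆ Δ and ε > 0, there exist a finite set A, a map φ : Γ → Sym(A) with φ(e) = id which is (F,ε)-multiplicative with respect to the normalized Hamming metric, a subset S ⊆ A with |S| > (1−ε)|A|, and injective partial homomorphisms π_s : E → Δ (s ∈ S), such that for all g ∈ F, h ∈ E, s ∈ S, if φ(g)(s) ∈ S and α(g)⁻¹(h) ∈ E then π_{φ(g)(s)}(h) = π_s(α(g)⁻¹(h)). -/

import Mathlib

/-- The normalized Hamming metric on the symmetric group of a finite set. -/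
noncomputable def dHam {A : Type*} [Fintype A] [DecidableEq A] (σ τ : Equiv.Perm A) : ℝ :=
  1 - ((Finset.univ.filter fun a => σ a = τ a).card : ℝ) / (Fintype.card A : ℝ)

/-- The Følner condition, characterizing amenability for discrete groups. -/
def FolnerCondition (Γ : Type*) [Group Γ] [DecidableEq Γ] : Prop :=
  ∀ (F : Finset Γ) (ε : ℝ), 0 < ε → ∃ A : Finset Γ, A.Nonempty ∧
    ∀ g ∈ F, (((A.image fun a => g * a) \ A).card : ℝ) < ε * A.card

open Finset

-- extend a ↦ g*a (where defined) to a permutation of the subtype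
lemma exists_perm {Γ : Type*} [Group Γ] [DecidableEq Γ] (s : Finset Γ) (g : Γ) :
    ∃ σ : Equiv.Perm {x // x ∈ s}, ∀ a : {x // x ∈ s}, g * (a:Γ) ∈ s → (σ a : Γ) = g * a := by
  classical
  let e : {a : {x // x ∈ s} // g * (a:Γ) ∈ s} ≃ {b : {x // x ∈ s} // g⁻¹ * (b:Γ) ∈ s} :=
  { toFun := fun a => ⟨⟨g * (a:{x // x ∈ s}), a.2⟩, by simp⟩
    invFun := fun b => ⟨⟨g⁻¹ * (b:{x // x ∈ s}), b.2⟩, by simp⟩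
    left_inv := fun a => by ext; simp
    right_inv := fun b => by ext; simp }
  refine ⟨e.extendSubtype, fun a ha => ?_⟩
  rw [e.extendSubtype_apply_of_mem a ha]; rfl

lemma card_filter_subtype {Γ : Type*} [DecidableEq Γ] (s : Finset Γ) (P : Γ → Prop)
    [DecidablePred P] :
    (Finset.univ.filter fun a : {x // x ∈ s} => P ↑a).card = (s.filter P).card := by
  classical
  refine Finset.card_bij (fun a _ => (a : Γ)) ?_ ?_ ?_
  · intro a ha; simp at ha ⊢; exact ha
  · intro a _ b _ h; exact Subtype.ext h
  · intro b hb; simp at hb; exact ⟨⟨b, hb.1⟩, by simp [hb.2], rfl⟩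

lemma card_filter_eq_sdiff {Γ : Type*} [Group Γ] [DecidableEq Γ] (s : Finset Γ) (g : Γ) :
    (s.filter fun a => g * a ∉ s).card = ((s.image fun a => g * a) \ s).card := by
  classical
  have h : (s.image fun a => g * a) \ s = (s.filter fun a => g * a ∉ s).image fun a => g * a := by
    ext x
    simp only [mem_sdiff, mem_image, mem_filter]
    constructor
    · rintro ⟨⟨a, ha, rfl⟩, hx⟩; exact ⟨a, ⟨ha, hx⟩, rfl⟩
    · rintro ⟨a, ⟨ha, hx⟩, rfl⟩; exact ⟨⟨a, ha, rfl⟩, hx⟩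
  rw [h, Finset.card_image_of_injective _ (mul_right_injective g)]

lemma permCongr_mul {A B : Type*} (e : A ≃ B) (σ τ : Equiv.Perm A) :
    e.permCongr σ * e.permCongr τ = e.permCongr (σ * τ) := by
  ext b; simp [Equiv.permCongr_apply]

lemma permCongr_one {A B : Type*} (e : A ≃ B) :
    e.permCongr (1 : Equiv.Perm A) = 1 := by
  ext b; simp [Equiv.permCongr_apply]

lemma dHam_permCongr {A B : Type*} [Fintype A] [DecidableEq A] [Fintype B] [DecidableEq B]
    (e : A ≃ B) (σ τ : Equiv.Perm A) :
    dHam (e.permCongr σ) (e.permCongr τ) = dHam σ τ := by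
  classical
  have hcard : (Finset.univ.filter fun b => (e.permCongr σ) b = (e.permCongr τ) b).card
      = (Finset.univ.filter fun a => σ a = τ a).card := by
    refine Finset.card_bij (fun b _ => e.symm b) ?_ ?_ ?_
    · intro b hb
      simp only [Finset.mem_filter, Finset.mem_univ, true_and,
        Equiv.permCongr_apply] at hb ⊢
      simpa using hb
    · intro b₁ _ b₂ _ h; exact e.symm.injective h
    · intro a ha
      simp only [Finset.mem_filter, Finset.mem_univ, true_and] at ha
      exact ⟨e a, by simp [Equiv.permCongr_apply, ha], by simp⟩
  rw [dHam, dHam, hcard, Fintype.card_congr e]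

/-- Every action by automorphisms of an amenable group `Γ` on a group `Δ` is a sofic
`𝒞`-action, witnessed inside `Δ` itself: for all finite `F ⊆ Γ`, `E ⊆ Δ` and `ε > 0`
there are a finite set `A`, a unital `(F,ε)`-multiplicative map `φ : Γ → Sym(A)`, a
subset `S ⊆ A` with `|S| > (1-ε)|A|`, and injective partial homomorphisms
`π_s : E → Δ` (`s ∈ S`) intertwining `φ` with the action. -/
theorem stmt17 {Γ Δ : Type*} [Group Γ] [Group Δ] [DecidableEq Γ]
    (hΓ : FolnerCondition Γ) (α : Γ →* MulAut Δ)
    (F : Finset Γ) (E : Finset Δ) (ε : ℝ) (hε : 0 < ε) :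
    ∃ (A : Type) (_ : Fintype A) (_ : DecidableEq A)
      (φ : Γ → Equiv.Perm A) (S : Finset A) (π : A → Δ → Δ),
      φ 1 = 1 ∧
      (∀ g ∈ F, ∀ h ∈ F, g * h ∈ F → dHam (φ (g * h)) (φ g * φ h) < ε) ∧
      ((1 - ε) * Fintype.card A < S.card) ∧
      (∀ s ∈ S, Set.InjOn (π s) ↑E ∧
        ∀ h₁ ∈ E, ∀ h₂ ∈ E, h₁ * h₂ ∈ E → π s (h₁ * h₂) = π s h₁ * π s h₂) ∧
      (∀ g ∈ F, ∀ h ∈ E, ∀ s ∈ S, φ g s ∈ S → α g⁻¹ h ∈ E →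
        π (φ g s) h = π s (α g⁻¹ h)) := by
  classical
  set ε' : ℝ := ε / (F.card + 2) with hε'def
  have hden : (0:ℝ) < (F.card : ℝ) + 2 := by positivity
  have hε' : 0 < ε' := div_pos hε hden
  have h2ε : 2 * ε' ≤ ε := by
    rw [hε'def]
    rw [mul_div_assoc']
    rw [div_le_iff₀ hden]
    nlinarith [mul_nonneg hε.le (Nat.cast_nonneg F.card)]
  have hFε : (F.card : ℝ) * ε' < ε := by
    rw [hε'def, mul_div_assoc']
    rw [div_lt_iff₀ hden]
    nlinarith
  obtain ⟨Afin, hAne, hFol⟩ := hΓ F ε' hε'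
  set n : ℝ := (Afin.card : ℝ) with hndef
  have hn0 : (0:ℝ) < n := by
    rw [hndef]; exact_mod_cast Finset.card_pos.mpr hAne
  choose σ hσ using fun g => exists_perm Afin g
  set φ₀ : Γ → Equiv.Perm {x // x ∈ Afin} := fun g => if g = 1 then 1 else σ g with hφdef
  have hφ : ∀ g, ∀ a : {x // x ∈ Afin}, g * (a:Γ) ∈ Afin → ((φ₀ g a : Γ)) = g * a := by
    intro g a ha
    by_cases hg : g = 1
    · simp [hφdef, hg]
    · simp only [hφdef, hg, if_false]; exact hσ g a ha
  set Bad : Γ → Finset {x // x ∈ Afin} :=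
    fun g => Finset.univ.filter fun a => g * (a:Γ) ∉ Afin with hBaddef
  have hBad : ∀ g ∈ F, ((Bad g).card : ℝ) < ε' * n := by
    intro g hg
    have h1 : (Bad g).card = (Afin.filter fun x => g * x ∉ Afin).card :=
      card_filter_subtype Afin (fun x => g * x ∉ Afin)
    rw [h1, card_filter_eq_sdiff Afin g]
    exact hFol g hg
  have hcardsub : Fintype.card {x // x ∈ Afin} = Afin.card := Fintype.card_coe Afin
  set S₀ : Finset {x // x ∈ Afin} :=
    Finset.univ.filter fun a => ∀ g ∈ F, g * (a:Γ) ∈ Afin with hSdef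
  -- transport to Fin
  set e : {x // x ∈ Afin} ≃ Fin (Fintype.card {x // x ∈ Afin}) := Fintype.equivFin _ with hedef
  refine ⟨Fin (Fintype.card {x // x ∈ Afin}), inferInstance, inferInstance,
    fun g => e.permCongr (φ₀ g), S₀.image e, fun a h => α ((e.symm a : {x // x ∈ Afin}) : Γ)⁻¹ h,
    ?_, ?_, ?_, ?_, ?_⟩
  · show e.permCongr (φ₀ 1) = 1
    have h1 : φ₀ 1 = 1 := by simp [hφdef]
    rw [h1, permCongr_one]
  · -- multiplicativity
    intro g hg h hh hgh
    rw [permCongr_mul, dHam_permCongr]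
    set D : Finset {x // x ∈ Afin} :=
      Finset.univ.filter fun a => ¬ (φ₀ (g*h)) a = (φ₀ g * φ₀ h) a with hDdef
    have hsub : D ⊆ Bad h ∪ Bad (g*h) := by
      intro a ha
      simp only [hDdef, Finset.mem_filter, Finset.mem_univ, true_and] at ha
      rw [Finset.mem_union, hBaddef]
      by_contra hcon
      push_neg at hcon
      simp only [Finset.mem_filter, Finset.mem_univ, true_and, not_not] at hcon
      obtain ⟨h1, h2⟩ := hcon
      apply ha
      apply Subtype.ext
      rw [hφ (g*h) a h2]
      have e1 : ((φ₀ h a : Γ)) = h * a := hφ h a h1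
      have h3 : g * ((φ₀ h a : Γ)) ∈ Afin := by rw [e1, ← mul_assoc]; exact h2
      show _ = ((φ₀ g) ((φ₀ h) a) : Γ)
      rw [hφ g (φ₀ h a) h3, e1, mul_assoc]
    have hD : (D.card : ℝ) < ε * n := by
      calc (D.card : ℝ) ≤ ((Bad h ∪ Bad (g*h)).card : ℝ) := by
            exact_mod_cast Finset.card_le_card hsub
        _ ≤ ((Bad h).card : ℝ) + ((Bad (g*h)).card : ℝ) := by
            exact_mod_cast Finset.card_union_le _ _
        _ < ε' * n + ε' * n := add_lt_add (hBad h hh) (hBad (g*h) hgh)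
        _ = (2 * ε') * n := by ring
        _ ≤ ε * n := mul_le_mul_of_nonneg_right h2ε hn0.le
    have hsplit : ((Finset.univ.filter fun a => (φ₀ (g*h)) a = (φ₀ g * φ₀ h) a).card : ℝ)
        + (D.card : ℝ) = n := by
      rw [hndef, ← hcardsub]
      exact_mod_cast (Finset.card_filter_add_card_filter_not
        (p := fun a => (φ₀ (g*h)) a = (φ₀ g * φ₀ h) a)).trans Finset.card_univ
    have hcast : (Fintype.card {x // x ∈ Afin} : ℝ) = n := by rw [hndef, hcardsub]
    rw [dHam, hcast]
    have hne : n ≠ 0 := hn0.ne'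
    have heq : (1:ℝ) - ((Finset.univ.filter fun a =>
        (φ₀ (g*h)) a = (φ₀ g * φ₀ h) a).card : ℝ) / n = (D.card : ℝ) / n := by
      rw [eq_div_iff hne, sub_mul, one_mul, div_mul_cancel₀ _ hne]
      linarith [hsplit]
    rw [heq, div_lt_iff₀ hn0]
    exact hD
  · -- cardinality of S
    have hScard : ((S₀.image e).card : ℝ) = (S₀.card : ℝ) := by
      exact_mod_cast Finset.card_image_of_injective _ e.injective
    have hcast : (Fintype.card (Fin (Fintype.card {x // x ∈ Afin})) : ℝ) = n := by
      rw [Fintype.card_fin, hndef, hcardsub]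
    rw [hScard, hcast]
    have hCsub : (Finset.univ.filter fun a : {x // x ∈ Afin} =>
        ¬ ∀ g ∈ F, g * (a:Γ) ∈ Afin) ⊆ F.biUnion Bad := by
      intro a ha
      simp only [Finset.mem_filter, Finset.mem_univ, true_and] at ha
      push_neg at ha
      obtain ⟨g, hg, hga⟩ := ha
      rw [Finset.mem_biUnion]
      exact ⟨g, hg, by simp [hBaddef, hga]⟩
    have hC : ((Finset.univ.filter fun a : {x // x ∈ Afin} =>
        ¬ ∀ g ∈ F, g * (a:Γ) ∈ Afin).card : ℝ) ≤ (F.card : ℝ) * (ε' * n) := by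
      calc ((Finset.univ.filter fun a : {x // x ∈ Afin} =>
            ¬ ∀ g ∈ F, g * (a:Γ) ∈ Afin).card : ℝ)
          ≤ ((F.biUnion Bad).card : ℝ) := by exact_mod_cast Finset.card_le_card hCsub
        _ ≤ (∑ g ∈ F, (Bad g).card : ℕ) := by exact_mod_cast Finset.card_biUnion_le
        _ = ∑ g ∈ F, ((Bad g).card : ℝ) := by push_cast; ring
        _ ≤ ∑ _g ∈ F, ε' * n := Finset.sum_le_sum fun g hg => (hBad g hg).le
        _ = (F.card : ℝ) * (ε' * n) := by rw [Finset.sum_const, nsmul_eq_mul]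
    have hsplit : (S₀.card : ℝ) + ((Finset.univ.filter fun a : {x // x ∈ Afin} =>
        ¬ ∀ g ∈ F, g * (a:Γ) ∈ Afin).card : ℝ) = n := by
      rw [hndef, ← hcardsub, hSdef]
      exact_mod_cast (Finset.card_filter_add_card_filter_not
        (p := fun a : {x // x ∈ Afin} => ∀ g ∈ F, g * (a:Γ) ∈ Afin)).trans Finset.card_univ
    have : (F.card : ℝ) * (ε' * n) < ε * n := by
      rw [← mul_assoc]
      exact mul_lt_mul_of_pos_right hFε hn0
    nlinarith
  · -- partial homomorphisms
    intro s _
    refine ⟨fun x _ y _ hxy => (α _).injective hxy, fun h₁ _ h₂ _ _ => map_mul _ _ _⟩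
  · -- intertwining
    intro g hg h _ s hs _ _
    simp only [Finset.mem_image] at hs
    obtain ⟨s₀, hs₀, rfl⟩ := hs
    simp only [Equiv.permCongr_apply, Equiv.symm_apply_apply]
    simp only [hSdef, Finset.mem_filter, Finset.mem_univ, true_and] at hs₀
    have hgs : g * (s₀ : Γ) ∈ Afin := hs₀ g hg
    rw [hφ g s₀ hgs]
    rw [mul_inv_rev, map_mul]
    rfl
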